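/- arXiv:2311.03147 — 5 statements merged into one kernel-verified Lean document; each statement's English description precedes it below -/
import Mathlib

section
/- For any two distinct odd primes p and q, the zero-divisor graph G(Z_{pq}) satisfies ldim_f(G(Z_{pq})) = 1. -/
open Finset

/-- A local resolving function of a graph `G`: a map `ζ : V → [0,1]` such that for every
pair of adjacent vertices `u v`, the sum of `ζ` over the local resolving neighborhood
`R{u,v} = {w : d(w,u) ≠ d(w,v)}` is at least `1`. -/
def IsLocalResolvingFunction {V : Type*} [Fintype V] (G : SimpleGraph V) (ζ : V → ℝ) : Prop :=
  (∀ w, ζ w ∈ Set.Icc (0 : ℝ) 1) ∧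
    ∀ u v, G.Adj u v →
      1 ≤ ∑ w ∈ Finset.univ.filter (fun w => G.dist w u ≠ G.dist w v), ζ w

/-- The local fractional metric dimension of `G`: the minimum of `∑ v, ζ v` over all
local resolving functions `ζ` of `G`. -/
noncomputable def ldimf {V : Type*} [Fintype V] (G : SimpleGraph V) : ℝ :=
  sInf {s : ℝ | ∃ ζ : V → ℝ, IsLocalResolvingFunction G ζ ∧ s = ∑ v, ζ v}

/-- The zero-divisor graph `G(Z_n)`: vertices are the zero divisors of `Z_n`
(residues `x ≢ 0 (mod n)` with `gcd(x, n) > 1`), two distinct vertices `x, y` being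
adjacent iff `x·y ≡ 0 (mod n)`. -/
def zeroDivisorGraph (n : ℕ) : SimpleGraph {x : Fin n // x.val ≠ 0 ∧ 1 < Nat.gcd x.val n} where
  Adj x y := x ≠ y ∧ (x.1.val * y.1.val) % n = 0
  symm := ⟨fun x y ⟨h1, h2⟩ => ⟨h1.symm, by rwa [Nat.mul_comm]⟩⟩
  loopless := ⟨fun x ⟨h, _⟩ => h rfl⟩

/-- For any two distinct odd primes `p` and `q`, `ldimf(G(Z_{pq})) = 1`. -/
theorem ldimf_zeroDivisorGraph_p_q (p q : ℕ) (hp : p.Prime) (hq : q.Prime)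
    (hop : Odd p) (hoq : Odd q) (hne : p ≠ q) :
    ldimf (zeroDivisorGraph (p * q)) = 1 := by
  classical
  have hp2 := hp.two_le
  have hq2 := hq.two_le
  have hcop : Nat.Coprime p q := (Nat.coprime_primes hp hq).mpr hne
  set n := p * q with hn
  have hn0 : 0 < n := Nat.mul_pos hp.pos hq.pos
  have hpn : p < n := (Nat.lt_mul_iff_one_lt_right hp.pos).mpr hq.one_lt
  have hqn : q < n := by rw [hn, mul_comm]; exact (Nat.lt_mul_iff_one_lt_right hq.pos).mpr hp.one_lt
  set G := zeroDivisorGraph n with hG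
  have hqdp : ¬ q ∣ p := fun h => hne ((Nat.prime_dvd_prime_iff_eq hq hp).mp h).symm
  -- vertex w0 = p
  have hw0mem : ((⟨p, hpn⟩ : Fin n)).val ≠ 0 ∧ 1 < Nat.gcd ((⟨p, hpn⟩ : Fin n)).val n := by
    refine ⟨hp.pos.ne', ?_⟩
    have : Nat.gcd p n = p := Nat.gcd_eq_left ⟨q, rfl⟩
    simpa [this] using hp.one_lt
  set w0 : {x : Fin n // x.val ≠ 0 ∧ 1 < Nat.gcd x.val n} := ⟨⟨p, hpn⟩, hw0mem⟩ with hw0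
  -- vertex v0 = q
  have hv0mem : ((⟨q, hqn⟩ : Fin n)).val ≠ 0 ∧ 1 < Nat.gcd ((⟨q, hqn⟩ : Fin n)).val n := by
    refine ⟨hq.pos.ne', ?_⟩
    have : Nat.gcd q n = q := Nat.gcd_eq_left ⟨p, mul_comm p q⟩
    simpa [this] using hq.one_lt
  set v0 : {x : Fin n // x.val ≠ 0 ∧ 1 < Nat.gcd x.val n} := ⟨⟨q, hqn⟩, hv0mem⟩ with hv0
  -- no vertex divisible by both p and q
  have hnotboth : ∀ x : {x : Fin n // x.val ≠ 0 ∧ 1 < Nat.gcd x.val n},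
      ¬ (p ∣ x.1.val ∧ q ∣ x.1.val) := by
    intro x hx
    have hdvd : n ∣ x.1.val := Nat.Coprime.mul_dvd_of_dvd_of_dvd hcop hx.1 hx.2
    exact x.2.1 (Nat.eq_zero_of_dvd_of_lt hdvd x.1.isLt)
  -- structure of edges
  have hedge : ∀ u v, G.Adj u v →
      (p ∣ u.1.val ∧ q ∣ v.1.val) ∨ (q ∣ u.1.val ∧ p ∣ v.1.val) := by
    intro u v h
    have hmul : (u.1.val * v.1.val) % n = 0 := h.2
    have hdvd : n ∣ u.1.val * v.1.val := Nat.dvd_of_mod_eq_zero hmul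
    have hpd : p ∣ u.1.val * v.1.val := dvd_trans ⟨q, rfl⟩ hdvd
    have hqd : q ∣ u.1.val * v.1.val := dvd_trans ⟨p, mul_comm p q⟩ hdvd
    rcases (hp.dvd_mul.mp hpd) with hpu | hpv
    · left
      refine ⟨hpu, ?_⟩
      rcases hq.dvd_mul.mp hqd with hqu | hqv
      · exact absurd ⟨hpu, hqu⟩ (hnotboth u)
      · exact hqv
    · right
      refine ⟨?_, hpv⟩
      rcases hq.dvd_mul.mp hqd with hqu | hqv
      · exact hqu
      · exact absurd ⟨hpv, hqv⟩ (hnotboth v)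
  -- w0 adjacent to every multiple of q
  have hadj : ∀ x, q ∣ x.1.val → G.Adj w0 x := by
    intro x hqx
    refine ⟨?_, ?_⟩
    · intro he
      apply hqdp
      have hx : x.1.val = p := by rw [← he]
      rwa [hx] at hqx
    · obtain ⟨k, hk⟩ := hqx
      show (p * x.1.val) % n = 0
      rw [hk, show p * (q * k) = n * k by rw [hn]; ring]
      exact Nat.mul_mod_right n k
  -- w0 not adjacent to any multiple of p
  have hnadj : ∀ x, p ∣ x.1.val → ¬ G.Adj w0 x := by
    intro x hpx h
    have hmul : (p * x.1.val) % n = 0 := h.2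
    have hdvd : n ∣ p * x.1.val := Nat.dvd_of_mod_eq_zero hmul
    have hqd : q ∣ p * x.1.val := dvd_trans ⟨p, mul_comm p q⟩ hdvd
    rcases hq.dvd_mul.mp hqd with h1 | h2
    · exact hqdp h1
    · exact hnotboth x ⟨hpx, h2⟩
  -- w0 resolves every edge
  have hres : ∀ u v, G.Adj u v → G.dist w0 u ≠ G.dist w0 v := by
    intro u v h
    rcases hedge u v h with ⟨hpu, hqv⟩ | ⟨hqu, hpv⟩
    · have h1 : G.dist w0 v = 1 := SimpleGraph.dist_eq_one_iff_adj.mpr (hadj v hqv)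
      have h2 : G.dist w0 u ≠ 1 := fun he =>
        hnadj u hpu (SimpleGraph.dist_eq_one_iff_adj.mp he)
      rw [h1]; exact h2
    · have h1 : G.dist w0 u = 1 := SimpleGraph.dist_eq_one_iff_adj.mpr (hadj u hqu)
      have h2 : G.dist w0 v ≠ 1 := fun he =>
        hnadj v hpv (SimpleGraph.dist_eq_one_iff_adj.mp he)
      rw [h1]; exact h2.symm
  -- the indicator function of w0
  set ζ : {x : Fin n // x.val ≠ 0 ∧ 1 < Nat.gcd x.val n} → ℝ :=
    fun w => if w = w0 then 1 else 0 with hζ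
  have hζsum : ∑ v, ζ v = 1 := by
    rw [hζ]
    rw [Finset.sum_ite_eq' Finset.univ w0 (fun _ => (1:ℝ))]
    simp
  have hζlrf : IsLocalResolvingFunction G ζ := by
    constructor
    · intro w
      by_cases h : w = w0 <;> simp [hζ, h]
    · intro u v h
      have hmem : w0 ∈ Finset.univ.filter (fun w => G.dist w u ≠ G.dist w v) := by
        rw [Finset.mem_filter]
        exact ⟨Finset.mem_univ _, hres u v h⟩
      rw [hζ, Finset.sum_ite_eq' _ w0 (fun _ => (1:ℝ)), if_pos hmem]
  have hmem1 : (1:ℝ) ∈ {s : ℝ | ∃ ζ' : _ → ℝ, IsLocalResolvingFunction G ζ' ∧ s = ∑ v, ζ' v} :=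
    ⟨ζ, hζlrf, hζsum.symm⟩
  -- lower bound
  have hlb : ∀ s ∈ {s : ℝ | ∃ ζ' : _ → ℝ, IsLocalResolvingFunction G ζ' ∧ s = ∑ v, ζ' v},
      (1:ℝ) ≤ s := by
    rintro s ⟨ζ', ⟨hb, hr⟩, rfl⟩
    have he0 : G.Adj w0 v0 := hadj v0 ⟨1, (mul_one q).symm⟩
    calc (1:ℝ) ≤ ∑ w ∈ Finset.univ.filter (fun w => G.dist w w0 ≠ G.dist w v0), ζ' w :=
          hr w0 v0 he0
      _ ≤ ∑ v, ζ' v := Finset.sum_le_sum_of_subset_of_nonneg (Finset.filter_subset _ _)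
          (fun i _ _ => (hb i).1)
  -- conclude
  show sInf _ = 1
  apply le_antisymm
  · exact csInf_le ⟨1, hlb⟩ hmem1
  · exact le_csInf ⟨1, hmem1⟩ hlb
end

section
/- Let p be a prime with p > 3 and let k ≥ 2 be an integer, and consider the graph G'(Z_{p^k}) whose vertices are the zero divisors of Z_{p^k}, two distinct vertices x and y being adjacent if and only if the product x·y mod p^k is not a unit of Z_{p^k}. Then ldim_f(G'(Z_{p^k})) = (p^{k−1} − 1)/2. -/
open Finset

/-- The graph `G'(Z_n)`: vertices are the zero divisors of `Z_n`
(residues `x ≢ 0 (mod n)` with `gcd(x, n) > 1`), two distinct vertices `x, y` being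
adjacent iff `x·y mod n` is not a unit of `Z_n`, i.e. `gcd(x·y, n) > 1`. -/
def zeroDivisorGraph' (n : ℕ) : SimpleGraph {x : Fin n // x.val ≠ 0 ∧ 1 < Nat.gcd x.val n} where
  Adj x y := x ≠ y ∧ 1 < Nat.gcd (x.1.val * y.1.val) n
  symm := ⟨fun x y ⟨h1, h2⟩ => ⟨h1.symm, by rwa [Nat.mul_comm]⟩⟩
  loopless := ⟨fun x ⟨h, _⟩ => h rfl⟩

lemma p_dvd_of_gcd_pow {p k a : ℕ} (hp : p.Prime) (h : 1 < Nat.gcd a (p ^ k)) :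
    p ∣ a := by
  set g := Nat.gcd a (p ^ k) with hg
  have hg1 : g ≠ 1 := Nat.ne_of_gt h
  have hmf : g.minFac ∣ p := (Nat.minFac_prime hg1).dvd_of_dvd_pow
    (g.minFac_dvd.trans (Nat.gcd_dvd_right _ _))
  have : g.minFac = p := ((Nat.prime_dvd_prime_iff_eq (Nat.minFac_prime hg1) hp).mp hmf)
  exact (this ▸ g.minFac_dvd).trans (Nat.gcd_dvd_left _ _)

lemma ldimf_complete {V : Type*} [Fintype V] [DecidableEq V] (G : SimpleGraph V)
    (hG : ∀ u v : V, u ≠ v → G.Adj u v) (h2 : 2 ≤ Fintype.card V) :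
    ldimf G = (Fintype.card V : ℝ) / 2 := by
  classical
  set c : ℝ := (Fintype.card V : ℝ) with hc
  have hc2 : (2 : ℝ) ≤ c := by rw [hc]; exact_mod_cast h2
  have hdist1 : ∀ w u : V, w ≠ u → G.dist w u = 1 := fun w u h =>
    SimpleGraph.dist_eq_one_iff_adj.mpr (hG w u h)
  have hfil : ∀ u v : V, u ≠ v →
      Finset.univ.filter (fun w => G.dist w u ≠ G.dist w v) = {u, v} := by
    intro u v huv
    ext w
    simp only [mem_filter, mem_univ, true_and, mem_insert, mem_singleton]
    by_cases hwu : w = u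
    · subst hwu
      simp [SimpleGraph.dist_self, hdist1 w v huv]
    · by_cases hwv : w = v
      · subst hwv
        simp [SimpleGraph.dist_self, hdist1 w u hwu]
      · simp [hdist1 w u hwu, hdist1 w v hwv, hwu, hwv]
  have hmem : ∃ ζ : V → ℝ, IsLocalResolvingFunction G ζ ∧ c / 2 = ∑ v, ζ v := by
    refine ⟨fun _ => 1 / 2, ⟨fun w => by norm_num, ?_⟩, ?_⟩
    · intro u v huv
      rw [hfil u v huv.ne, sum_pair huv.ne]
      norm_num
    · rw [sum_const, card_univ, nsmul_eq_mul]
      ring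
  have hlb : ∀ s ∈ {s : ℝ | ∃ ζ : V → ℝ, IsLocalResolvingFunction G ζ ∧ s = ∑ v, ζ v},
      c / 2 ≤ s := by
    rintro s ⟨ζ, hζ, rfl⟩
    set T : ℝ := ∑ v, ζ v with hT
    have key : ∀ u v : V, u ≠ v → 1 ≤ ζ u + ζ v := by
      intro u v h
      have := hζ.2 u v (hG u v h)
      rwa [hfil u v h, sum_pair h] at this
    have hcard1 : ((Fintype.card V - 1 : ℕ) : ℝ) = c - 1 := by
      rw [Nat.cast_sub (le_trans one_le_two h2)]; simp [hc]
    have hrow : ∀ u : V, ∑ v ∈ Finset.univ.erase u, (ζ u + ζ v)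
        = (c - 1) * ζ u + (T - ζ u) := by
      intro u
      rw [sum_add_distrib, sum_const, card_erase_of_mem (mem_univ u), card_univ,
        Finset.sum_erase_eq_sub (mem_univ u), nsmul_eq_mul, hcard1, hT]
    have hmain : c * (c - 1) ≤ 2 * (c - 1) * T := by
      have h1 : ∀ u : V, (c - 1 : ℝ) ≤ ∑ v ∈ Finset.univ.erase u, (ζ u + ζ v) := by
        intro u
        calc (c - 1 : ℝ) = ∑ _v ∈ Finset.univ.erase u, (1 : ℝ) := by
              rw [sum_const, card_erase_of_mem (mem_univ u), card_univ, nsmul_eq_mul,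
                hcard1, mul_one]
          _ ≤ _ := sum_le_sum (fun v hv => key u v (Ne.symm (mem_erase.mp hv).1))
      calc c * (c - 1) = ∑ _u : V, (c - 1 : ℝ) := by
            rw [sum_const, card_univ, nsmul_eq_mul]
        _ ≤ ∑ u : V, ∑ v ∈ Finset.univ.erase u, (ζ u + ζ v) :=
            sum_le_sum (fun u _ => h1 u)
        _ = ∑ u : V, ((c - 1) * ζ u + (T - ζ u)) := by
            exact sum_congr rfl (fun u _ => hrow u)
        _ = (c - 1) * T + (c * T - T) := by
            rw [sum_add_distrib, ← mul_sum, sum_sub_distrib, sum_const, card_univ,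
              nsmul_eq_mul, hT]
        _ = 2 * (c - 1) * T := by ring
    have hpos : (0 : ℝ) < c - 1 := by linarith
    nlinarith [hmain, hpos]
  rw [ldimf]
  exact le_antisymm (csInf_le ⟨c / 2, fun s hs => hlb s hs⟩ hmem)
    (le_csInf ⟨c / 2, hmem⟩ hlb)

lemma card_zd (p k : ℕ) (hp : p.Prime) (hk : 1 ≤ k) :
    Fintype.card {x : Fin (p ^ k) // x.val ≠ 0 ∧ 1 < Nat.gcd x.val (p ^ k)} =
      p ^ (k - 1) - 1 := by
  classical
  have hp2 : 2 ≤ p := hp.two_le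
  have hpk : 0 < p ^ k := Nat.pow_pos hp.pos
  have hiff : ∀ x : Fin (p ^ k),
      (x.val ≠ 0 ∧ 1 < Nat.gcd x.val (p ^ k)) ↔ (x.val ≠ 0 ∧ p ∣ x.val) := by
    intro x
    constructor
    · rintro ⟨h0, hg⟩
      exact ⟨h0, p_dvd_of_gcd_pow hp hg⟩
    · rintro ⟨h0, hd⟩
      refine ⟨h0, ?_⟩
      have hdg : p ∣ Nat.gcd x.val (p ^ k) :=
        Nat.dvd_gcd hd (dvd_pow_self p (Nat.one_le_iff_ne_zero.mp hk))
      have : 0 < Nat.gcd x.val (p ^ k) := Nat.gcd_pos_of_pos_right _ hpk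
      exact lt_of_lt_of_le hp.one_lt (Nat.le_of_dvd this hdg)
  rw [Fintype.card_subtype]
  have hfs : (Finset.univ.filter
        (fun x : Fin (p ^ k) => x.val ≠ 0 ∧ 1 < Nat.gcd x.val (p ^ k))).card
      = ((Finset.Ioc 0 (p ^ k - 1)).filter (fun b => p ∣ b)).card := by
    apply Finset.card_bij (fun a _ => a.val)
    · intro a ha
      simp only [mem_filter, mem_univ, true_and, hiff] at ha
      rw [mem_filter, mem_Ioc]
      exact ⟨⟨Nat.pos_of_ne_zero ha.1, Nat.le_sub_one_of_lt a.isLt⟩, ha.2⟩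
    · intro a _ b _ h
      exact Fin.ext h
    · intro b hb
      rw [mem_filter, mem_Ioc] at hb
      have hblt : b < p ^ k := lt_of_le_of_lt hb.1.2 (Nat.sub_lt hpk one_pos)
      refine ⟨⟨b, hblt⟩, ?_, rfl⟩
      simp only [mem_filter, mem_univ, true_and, hiff]
      exact ⟨Nat.pos_iff_ne_zero.mp hb.1.1, hb.2⟩
  rw [hfs, Nat.Ioc_filter_dvd_card_eq_div]
  have h1 : 1 ≤ p ^ (k - 1) := Nat.one_le_pow _ _ hp.pos
  have hsplit : p ^ k - 1 = p * (p ^ (k - 1) - 1) + (p - 1) := by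
    have hpk' : p ^ k = p * p ^ (k - 1) := by
      calc p ^ k = p ^ (k - 1 + 1) := by rw [Nat.sub_add_cancel hk]
        _ = p * p ^ (k - 1) := by rw [pow_succ]; ring
    have hms : p * (p ^ (k - 1) - 1) = p * p ^ (k - 1) - p := by
      rw [Nat.mul_sub, mul_one]
    have hle : p ≤ p * p ^ (k - 1) := Nat.le_mul_of_pos_right p (Nat.pos_of_ne_zero (by positivity))
    omega
  rw [hsplit, Nat.mul_add_div hp.pos, Nat.div_eq_of_lt (by omega), add_zero]


/-- For every prime `p > 3` and every integer `k ≥ 2`,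
`ldimf(G'(Z_{p^k})) = (p^(k-1) - 1) / 2`. -/
theorem ldimf_zeroDivisorGraph'_p_pow_k (p k : ℕ) (hp : p.Prime) (h3 : 3 < p)
    (hk : 2 ≤ k) :
    ldimf (zeroDivisorGraph' (p ^ k)) = ((p : ℝ) ^ (k - 1) - 1) / 2 := by
  classical
  have hk1 : 1 ≤ k := le_trans one_le_two hk
  have hpk : 0 < p ^ k := Nat.pow_pos hp.pos
  have hG : ∀ u v : {x : Fin (p ^ k) // x.val ≠ 0 ∧ 1 < Nat.gcd x.val (p ^ k)},
      u ≠ v → (zeroDivisorGraph' (p ^ k)).Adj u v := by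
    intro u v huv
    refine ⟨huv, ?_⟩
    have hdu : p ∣ u.1.val := p_dvd_of_gcd_pow hp u.2.2
    have hdg : p ∣ Nat.gcd (u.1.val * v.1.val) (p ^ k) :=
      Nat.dvd_gcd (hdu.mul_right _) (dvd_pow_self p (Nat.one_le_iff_ne_zero.mp hk1))
    have hpos : 0 < Nat.gcd (u.1.val * v.1.val) (p ^ k) :=
      Nat.gcd_pos_of_pos_right _ hpk
    exact lt_of_lt_of_le hp.one_lt (Nat.le_of_dvd hpos hdg)
  have hcard := card_zd p k hp hk1
  have h1 : p ≤ p ^ (k - 1) := by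
    calc p = p ^ 1 := (pow_one p).symm
    _ ≤ p ^ (k - 1) := Nat.pow_le_pow_right hp.pos (by omega)
  have h2 : 2 ≤ Fintype.card {x : Fin (p ^ k) // x.val ≠ 0 ∧ 1 < Nat.gcd x.val (p ^ k)} := by
    rw [hcard]; omega
  rw [ldimf_complete _ hG h2, hcard]
  have h1' : 1 ≤ p ^ (k - 1) := le_trans hp.one_le h1
  rw [Nat.cast_sub h1']
  push_cast
  ring
end

section
/- For every integer k > 2, the graph G(Z*_{2^k}) satisfies (2^k−1)/(2^{k−1}+1) ≤ ldim_f(G(Z*_{2^k})) ≤ (2^k−1)/2. -/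
open Finset

/-- The graph `G(Z*_n)`: vertices are the nonzero residues `1, …, n-1` of `Z_n`,
two distinct vertices `x, y` being adjacent iff `x·y mod n` is not a unit of `Z_n`,
i.e. `gcd(x·y, n) > 1`. -/
def zStarGraph (n : ℕ) : SimpleGraph {x : Fin n // x.val ≠ 0} where
  Adj x y := x ≠ y ∧ 1 < Nat.gcd (x.1.val * y.1.val) n
  symm := ⟨fun x y ⟨h1, h2⟩ => ⟨h1.symm, by rwa [Nat.mul_comm]⟩⟩
  loopless := ⟨fun x ⟨h, _⟩ => h rfl⟩

section aux

variable {k : ℕ}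

private lemma adj_of_even (hk : 0 < k) (x y : {x : Fin (2 ^ k) // x.val ≠ 0}) (hxy : x ≠ y)
    (hx : 2 ∣ x.1.val) : (zStarGraph (2 ^ k)).Adj x y := by
  refine ⟨hxy, ?_⟩
  have h2 : 2 ∣ Nat.gcd (x.1.val * y.1.val) (2 ^ k) :=
    Nat.dvd_gcd (hx.mul_right _) (dvd_pow_self 2 hk.ne')
  have h3 : 0 < Nat.gcd (x.1.val * y.1.val) (2 ^ k) :=
    Nat.gcd_pos_of_pos_right _ (by positivity)
  omega

private lemma even_pair (hk : 0 < k) {ζ : {x : Fin (2 ^ k) // x.val ≠ 0} → ℝ}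
    (hζ : IsLocalResolvingFunction (zStarGraph (2 ^ k)) ζ)
    (u v : {x : Fin (2 ^ k) // x.val ≠ 0}) (huv : u ≠ v) (hu : 2 ∣ u.1.val)
    (hv : 2 ∣ v.1.val) : 1 ≤ ζ u + ζ v := by
  have h1 := hζ.2 u v (adj_of_even hk u v huv hu)
  have hsub : (Finset.univ.filter fun w =>
      (zStarGraph (2 ^ k)).dist w u ≠ (zStarGraph (2 ^ k)).dist w v) ⊆ {u, v} := by
    intro w hw
    simp only [mem_filter] at hw
    by_contra hmem
    simp only [mem_insert, mem_singleton, not_or] at hmem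
    apply hw.2
    rw [SimpleGraph.dist_eq_one_iff_adj.2 (adj_of_even hk u w (Ne.symm hmem.1) hu).symm,
        SimpleGraph.dist_eq_one_iff_adj.2 (adj_of_even hk v w (Ne.symm hmem.2) hv).symm]
  calc (1:ℝ) ≤ _ := h1
    _ ≤ ∑ w ∈ ({u, v} : Finset _), ζ w :=
        Finset.sum_le_sum_of_subset_of_nonneg hsub (fun i _ _ => (hζ.1 i).1)
    _ = ζ u + ζ v := Finset.sum_pair huv

private lemma card_V (hk : 0 < k) :
    Fintype.card {x : Fin (2 ^ k) // x.val ≠ 0} = 2 ^ k - 1 := by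
  haveI : NeZero (2 ^ k) := ⟨by positivity⟩
  rw [Fintype.card_subtype]
  have h : (Finset.univ.filter fun x : Fin (2 ^ k) => x.val ≠ 0) = Finset.univ.erase 0 := by
    rw [← Finset.filter_ne']
    apply Finset.filter_congr
    intro x _
    exact Fin.val_ne_zero_iff
  rw [h, Finset.card_erase_of_mem (Finset.mem_univ _), Finset.card_univ, Fintype.card_fin]

private lemma card_evens (hk : 0 < k) :
    (Finset.univ.filter fun x : {x : Fin (2 ^ k) // x.val ≠ 0} => 2 ∣ x.1.val).card
      = 2 ^ (k - 1) - 1 := by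
  have hpow : 2 ^ k = 2 * 2 ^ (k - 1) := by
    conv_rhs => rw [← pow_succ']
    congr 1
    omega
  rw [← Finset.card_range (2 ^ (k - 1) - 1)]
  apply Finset.card_bij (i := fun x _ => x.1.val / 2 - 1)
  · intro a ha
    simp only [Finset.mem_filter] at ha
    have h1 := a.2
    have h2 := a.1.isLt
    simp only [Finset.mem_range]
    omega
  · intro a ha b hb h
    simp only [Finset.mem_filter] at ha hb
    have h1 := a.2
    have h2 := b.2
    apply Subtype.ext
    apply Fin.ext
    have := ha.2
    have := hb.2
    omega
  · intro b hb
    simp only [Finset.mem_range] at hb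
    refine ⟨⟨⟨2 * (b + 1), by omega⟩, by simp⟩, ?_, ?_⟩
    · simp only [Finset.mem_filter, Finset.mem_univ, true_and]
      exact ⟨b + 1, rfl⟩
    · simp only
      omega

end aux

/-- For every integer `k > 2`,
`(2^k-1)/(2^(k-1)+1) ≤ ldimf(G(Z*_{2^k})) ≤ (2^k-1)/2`. -/
theorem ldimf_zStarGraph_two_pow (k : ℕ) (hk : 2 < k) :
    ((2 : ℝ) ^ k - 1) / ((2 : ℝ) ^ (k - 1) + 1) ≤ ldimf (zStarGraph (2 ^ k)) ∧
      ldimf (zStarGraph (2 ^ k)) ≤ ((2 : ℝ) ^ k - 1) / 2 := by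
  have hk1 : 0 < k := by omega
  set G := zStarGraph (2 ^ k) with hG
  -- the constant function 1/2 is a local resolving function
  have hfeas : IsLocalResolvingFunction G (fun _ => (1 : ℝ) / 2) := by
    constructor
    · intro w; constructor <;> norm_num
    · intro u v huv
      have hsub : ({u, v} : Finset _) ⊆
          Finset.univ.filter (fun w => G.dist w u ≠ G.dist w v) := by
        intro w hw
        simp only [mem_insert, mem_singleton] at hw
        simp only [mem_filter, mem_univ, true_and]
        have hd : G.dist u v = 1 := SimpleGraph.dist_eq_one_iff_adj.2 huv
        have hd' : G.dist v u = 1 := SimpleGraph.dist_eq_one_iff_adj.2 huv.symm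
        rcases hw with rfl | rfl
        · rw [SimpleGraph.dist_self, hd]; omega
        · rw [SimpleGraph.dist_self, hd']; omega
      have hcard : 2 ≤ (Finset.univ.filter (fun w => G.dist w u ≠ G.dist w v)).card := by
        calc 2 = ({u, v} : Finset _).card := (Finset.card_pair huv.ne).symm
          _ ≤ _ := Finset.card_le_card hsub
      rw [Finset.sum_const, nsmul_eq_mul]
      have : (2 : ℝ) ≤ ((Finset.univ.filter (fun w => G.dist w u ≠ G.dist w v)).card : ℝ) := by
        exact_mod_cast hcard
      linarith
  have hsum0 : ∑ v : {x : Fin (2 ^ k) // x.val ≠ 0}, (fun _ => (1 : ℝ) / 2) v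
      = ((2 : ℝ) ^ k - 1) / 2 := by
    rw [Finset.sum_const, Finset.card_univ, card_V hk1, nsmul_eq_mul]
    have h1 : (1 : ℕ) ≤ 2 ^ k := Nat.one_le_two_pow
    push_cast [h1]
    ring
  have hmem : ((2 : ℝ) ^ k - 1) / 2 ∈
      {s : ℝ | ∃ ζ, IsLocalResolvingFunction G ζ ∧ s = ∑ v, ζ v} :=
    ⟨fun _ => (1 : ℝ) / 2, hfeas, hsum0.symm⟩
  have hbdd : BddBelow {s : ℝ | ∃ ζ, IsLocalResolvingFunction G ζ ∧ s = ∑ v, ζ v} := by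
    refine ⟨0, fun s hs => ?_⟩
    obtain ⟨ζ, hζ, rfl⟩ := hs
    exact Finset.sum_nonneg fun i _ => (hζ.1 i).1
  constructor
  · -- lower bound
    apply le_csInf ⟨_, hmem⟩
    rintro s ⟨ζ, hζ, rfl⟩
    set S := Finset.univ.filter fun x : {x : Fin (2 ^ k) // x.val ≠ 0} => 2 ∣ x.1.val with hS
    have hEcard : S.card = 2 ^ (k - 1) - 1 := card_evens hk1
    have hpow4 : 4 ≤ 2 ^ (k - 1) := by
      calc 4 = 2 ^ 2 := rfl
        _ ≤ 2 ^ (k - 1) := Nat.pow_le_pow_right (by norm_num) (by omega)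
    have hE2 : 2 ≤ S.card := by omega
    set t := ∑ x ∈ S, ζ x with ht
    -- key inequality: sum over ordered pairs of distinct evens
    have h1 : (S.card : ℝ) * ((S.card : ℝ) - 1) ≤ ∑ u ∈ S, ∑ v ∈ S.erase u, (ζ u + ζ v) := by
      have : ∀ u ∈ S, ((S.card : ℝ) - 1) ≤ ∑ v ∈ S.erase u, (ζ u + ζ v) := by
        intro u hu
        have hpt : ∀ v ∈ S.erase u, (1 : ℝ) ≤ ζ u + ζ v := by
          intro v hv
          have hvS := Finset.mem_of_mem_erase hv
          have hne : u ≠ v := (Finset.ne_of_mem_erase hv).symm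
          simp only [hS, Finset.mem_filter] at hu hvS
          exact even_pair hk1 hζ u v hne hu.2 hvS.2
        calc ((S.card : ℝ) - 1) = ((S.erase u).card : ℝ) := by
              rw [Finset.card_erase_of_mem hu]
              have := hE2
              push_cast [Nat.cast_sub (by omega : 1 ≤ S.card)]
              ring
          _ = ∑ _v ∈ S.erase u, (1 : ℝ) := by rw [Finset.sum_const, nsmul_eq_mul, mul_one]
          _ ≤ _ := Finset.sum_le_sum hpt
      calc (S.card : ℝ) * ((S.card : ℝ) - 1) = ∑ _u ∈ S, ((S.card : ℝ) - 1) := by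
            rw [Finset.sum_const, nsmul_eq_mul]
        _ ≤ _ := Finset.sum_le_sum this
    have h2 : ∑ u ∈ S, ∑ v ∈ S.erase u, (ζ u + ζ v) = 2 * ((S.card : ℝ) - 1) * t := by
      have hinner : ∀ u ∈ S, ∑ v ∈ S.erase u, (ζ u + ζ v)
          = ((S.card : ℝ) - 1) * ζ u + (t - ζ u) := by
        intro u hu
        rw [Finset.sum_add_distrib, Finset.sum_const, Finset.card_erase_of_mem hu,
          nsmul_eq_mul, Finset.sum_erase_eq_sub hu]
        push_cast [Nat.cast_sub (by omega : 1 ≤ S.card)]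
        ring
      rw [Finset.sum_congr rfl hinner, Finset.sum_add_distrib, Finset.sum_sub_distrib,
        Finset.sum_const, ← Finset.mul_sum, ← ht, nsmul_eq_mul]
      ring
    have hc4 : (4 : ℝ) ≤ (S.card : ℝ) + 1 := by
      have : 3 ≤ S.card := by omega
      have : (3 : ℝ) ≤ (S.card : ℝ) := by exact_mod_cast this
      linarith
    have htge : (S.card : ℝ) / 2 ≤ t := by
      rw [h2] at h1
      nlinarith
    have htotal : t ≤ ∑ v, ζ v :=
      Finset.sum_le_sum_of_subset_of_nonneg (Finset.subset_univ S) fun i _ _ => (hζ.1 i).1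
    -- numeric comparison
    have hcast : (S.card : ℝ) = (2 : ℝ) ^ (k - 1) - 1 := by
      rw [hEcard]
      have : (1 : ℕ) ≤ 2 ^ (k - 1) := Nat.one_le_two_pow
      push_cast [this]
      ring
    set x := (2 : ℝ) ^ (k - 1) with hx
    have hx4 : (4 : ℝ) ≤ x := by
      calc (4 : ℝ) = 2 ^ 2 := by norm_num
        _ ≤ x := pow_le_pow_right₀ (by norm_num) (by omega)
    have hxk : (2 : ℝ) ^ k = 2 * x := by
      rw [hx, ← pow_succ']
      congr 1
      omega
    have hfrac : ((2 : ℝ) ^ k - 1) / ((2 : ℝ) ^ (k - 1) + 1) ≤ (x - 1) / 2 := by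
      rw [hxk, ← hx, div_le_div_iff₀ (by linarith) (by norm_num)]
      nlinarith
    calc ((2 : ℝ) ^ k - 1) / ((2 : ℝ) ^ (k - 1) + 1) ≤ (x - 1) / 2 := hfrac
      _ = (S.card : ℝ) / 2 := by rw [hcast]
      _ ≤ t := htge
      _ ≤ _ := htotal
  · -- upper bound
    exact csInf_le hbdd hmem
end

section
/- For every odd prime p, the graph G(Z*_{p^2}) satisfies (p^2−1)/(p^2−p+1) ≤ ldim_f(G(Z*_{p^2})) ≤ (p^2−1)/2. -/
open Finset

/-- For every odd prime `p`,
`(p^2-1)/(p^2-p+1) ≤ ldimf(G(Z*_{p^2})) ≤ (p^2-1)/2`. -/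
theorem ldimf_zStarGraph_p_sq (p : ℕ) (hp : p.Prime) (hodd : Odd p) :
    ((p : ℝ) ^ 2 - 1) / ((p : ℝ) ^ 2 - (p : ℝ) + 1) ≤ ldimf (zStarGraph (p ^ 2)) ∧
      ldimf (zStarGraph (p ^ 2)) ≤ ((p : ℝ) ^ 2 - 1) / 2 := by
  have hp2 : 2 ≤ p := hp.two_le
  have hpne2 : p ≠ 2 := by rintro rfl; exact (by decide : ¬ Odd 2) hodd
  have hp3 : 3 ≤ p := by omega
  have hpp : p < p ^ 2 := by nlinarith
  have h2p : 2 * p < p ^ 2 := by nlinarith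
  have h1p : 1 < p ^ 2 := by nlinarith
  set G := zStarGraph (p ^ 2) with hG
  have hgcd : ∀ m : ℕ, 1 < Nat.gcd m (p ^ 2) ↔ p ∣ m := by
    intro m
    have hpos : 0 < Nat.gcd m (p ^ 2) := Nat.gcd_pos_of_pos_right m (by positivity)
    have h1 : (1 < Nat.gcd m (p ^ 2)) ↔ ¬ Nat.Coprime m (p ^ 2) := by
      unfold Nat.Coprime; omega
    rw [h1, Nat.coprime_pow_right_iff (by norm_num), Nat.coprime_comm,
      hp.coprime_iff_not_dvd, not_not]
  have hadj : ∀ x y : {x : Fin (p ^ 2) // x.val ≠ 0},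
      G.Adj x y ↔ x ≠ y ∧ (p ∣ x.1.val ∨ p ∣ y.1.val) := by
    intro x y
    show (x ≠ y ∧ 1 < Nat.gcd _ _) ↔ _
    rw [hgcd, Nat.Prime.dvd_mul hp]
  have hdist1 : ∀ x y, G.Adj x y → G.dist x y = 1 :=
    fun x y h => SimpleGraph.dist_eq_one_iff_adj.mpr h
  -- vertices
  let u1 : {x : Fin (p ^ 2) // x.val ≠ 0} := ⟨⟨p, hpp⟩, by simp; omega⟩
  let u2 : {x : Fin (p ^ 2) // x.val ≠ 0} := ⟨⟨2 * p, h2p⟩, by simp; omega⟩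
  let v0 : {x : Fin (p ^ 2) // x.val ≠ 0} := ⟨⟨1, h1p⟩, by simp⟩
  have hu1v : u1.1.val = p := rfl
  have hu2v : u2.1.val = 2 * p := rfl
  have hv0v : v0.1.val = 1 := rfl
  have hne12 : u1 ≠ u2 := fun h => by
    have h' : p = 2 * p := congrArg (fun z : {x : Fin (p ^ 2) // x.val ≠ 0} => z.1.val) h
    omega
  have hnpv0 : ¬ p ∣ v0.1.val := by rw [hv0v, Nat.dvd_one]; omega
  have hne1v : u1 ≠ v0 := fun h => by
    have h' : p = 1 := congrArg (fun z : {x : Fin (p ^ 2) // x.val ≠ 0} => z.1.val) h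
    omega
  have hne2v : u2 ≠ v0 := fun h => by
    have h' : 2 * p = 1 := congrArg (fun z : {x : Fin (p ^ 2) // x.val ≠ 0} => z.1.val) h
    omega
  have hd1 : p ∣ u1.1.val := by rw [hu1v]
  have hd2 : p ∣ u2.1.val := by rw [hu2v]; exact dvd_mul_left p 2
  have e12 : G.Adj u1 u2 := (hadj _ _).mpr ⟨hne12, Or.inl hd1⟩
  have e1v : G.Adj u1 v0 := (hadj _ _).mpr ⟨hne1v, Or.inl hd1⟩
  have e2v : G.Adj u2 v0 := (hadj _ _).mpr ⟨hne2v, Or.inl hd2⟩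
  -- cardinality
  have hn0 : NeZero (p ^ 2) := ⟨by positivity⟩
  have hcard : Fintype.card {x : Fin (p ^ 2) // x.val ≠ 0} = p ^ 2 - 1 := by
    rw [Fintype.card_subtype]
    have hf : (univ.filter fun x : Fin (p ^ 2) => x.val ≠ 0) = univ.erase 0 := by
      ext x; simp only [mem_filter, mem_univ, true_and, mem_erase, and_true, ne_eq, Fin.ext_iff, Fin.val_zero]
    rw [hf, Finset.card_erase_of_mem (mem_univ 0), Finset.card_univ, Fintype.card_fin]
  set S := {s : ℝ | ∃ ζ : {x : Fin (p ^ 2) // x.val ≠ 0} → ℝ,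
      IsLocalResolvingFunction G ζ ∧ s = ∑ v, ζ v} with hS
  -- membership of the constant 1/2 function
  have hmem : ((p : ℝ) ^ 2 - 1) / 2 ∈ S := by
    refine ⟨fun _ => 1 / 2, ⟨fun w => ⟨by norm_num, by norm_num⟩, ?_⟩, ?_⟩
    · intro u v huv
      have hsub : ({u, v} : Finset _) ⊆
          univ.filter (fun w => G.dist w u ≠ G.dist w v) := by
        intro w hw
        simp only [mem_insert, mem_singleton] at hw
        simp only [mem_filter, mem_univ, true_and]
        rcases hw with rfl | rfl
        · rw [SimpleGraph.dist_self, hdist1 w v huv]; omega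
        · rw [SimpleGraph.dist_self, hdist1 w u huv.symm]; omega
      calc (1 : ℝ) = ∑ w ∈ ({u, v} : Finset _), (1 / 2 : ℝ) := by
              rw [Finset.sum_pair huv.ne]; norm_num
        _ ≤ _ := Finset.sum_le_sum_of_subset_of_nonneg hsub (by intros; norm_num)
    · rw [Finset.sum_const, Finset.card_univ, hcard, nsmul_eq_mul]
      rw [Nat.cast_sub (by nlinarith : 1 ≤ p ^ 2)]
      push_cast
      ring
  -- lower bound 3/2 for every element of S
  have hset_lb : ∀ s ∈ S, (3 : ℝ) / 2 ≤ s := by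
    rintro s ⟨ζ, ⟨hbound, hcon⟩, rfl⟩
    have hnn : ∀ w, 0 ≤ ζ w := fun w => (hbound w).1
    set I := univ.filter (fun w : {x : Fin (p ^ 2) // x.val ≠ 0} => ¬ p ∣ w.1.val) with hI
    have hu1I : u1 ∉ I := fun h => (mem_filter.mp h).2 hd1
    have hu2I : u2 ∉ I := fun h => (mem_filter.mp h).2 hd2
    -- clique edge constraint
    have hR12 : univ.filter (fun w => G.dist w u1 ≠ G.dist w u2) ⊆ {u1, u2} := by
      intro w hw
      simp only [mem_filter, mem_univ, true_and] at hw
      by_contra hwmem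
      simp only [mem_insert, mem_singleton, not_or] at hwmem
      exact hw (by rw [hdist1 w u1 ((hadj _ _).mpr ⟨hwmem.1, Or.inr hd1⟩),
        hdist1 w u2 ((hadj _ _).mpr ⟨hwmem.2, Or.inr hd2⟩)])
    have h1 : 1 ≤ ζ u1 + ζ u2 := by
      calc (1 : ℝ) ≤ _ := hcon u1 u2 e12
        _ ≤ ∑ w ∈ ({u1, u2} : Finset _), ζ w :=
            Finset.sum_le_sum_of_subset_of_nonneg hR12 (fun i _ _ => hnn i)
        _ = ζ u1 + ζ u2 := Finset.sum_pair hne12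
    -- mixed edge constraint
    have hRmix : ∀ u : {x : Fin (p ^ 2) // x.val ≠ 0}, p ∣ u.1.val →
        univ.filter (fun w => G.dist w u ≠ G.dist w v0) ⊆ insert u I := by
      intro u hu w hw
      simp only [mem_filter, mem_univ, true_and] at hw
      by_contra hmem
      simp only [mem_insert, hI, mem_filter, mem_univ, true_and, not_or, not_not] at hmem
      obtain ⟨hwu, hwdvd⟩ := hmem
      have hwv : w ≠ v0 := by
        rintro rfl
        rw [hv0v, Nat.dvd_one] at hwdvd
        omega
      exact hw (by rw [hdist1 w u ((hadj _ _).mpr ⟨hwu, Or.inr hu⟩),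
        hdist1 w v0 ((hadj _ _).mpr ⟨hwv, Or.inl hwdvd⟩)])
    have hmix : ∀ u : {x : Fin (p ^ 2) // x.val ≠ 0}, p ∣ u.1.val → u ∉ I →
        G.Adj u v0 → 1 ≤ ζ u + ∑ w ∈ I, ζ w := by
      intro u hu huI hadjv
      calc (1 : ℝ) ≤ _ := hcon u v0 hadjv
        _ ≤ ∑ w ∈ insert u I, ζ w :=
            Finset.sum_le_sum_of_subset_of_nonneg (hRmix u hu) (fun i _ _ => hnn i)
        _ = ζ u + ∑ w ∈ I, ζ w := Finset.sum_insert huI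
    have h2 := hmix u1 hd1 hu1I e1v
    have h3 := hmix u2 hd2 hu2I e2v
    -- total sum bound
    have hT : ζ u1 + (ζ u2 + ∑ w ∈ I, ζ w) ≤ ∑ v, ζ v := by
      have hu1' : u1 ∉ insert u2 I := by
        simp only [mem_insert, not_or]; exact ⟨hne12, hu1I⟩
      calc ζ u1 + (ζ u2 + ∑ w ∈ I, ζ w)
          = ∑ w ∈ insert u1 (insert u2 I), ζ w := by
            rw [Finset.sum_insert hu1', Finset.sum_insert hu2I]
        _ ≤ ∑ v, ζ v :=
            Finset.sum_le_sum_of_subset_of_nonneg (Finset.subset_univ _) (fun i _ _ => hnn i)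
    linarith
  have hbdd : BddBelow S := ⟨3 / 2, hset_lb⟩
  have hp3' : (3 : ℝ) ≤ (p : ℝ) := by exact_mod_cast hp3
  constructor
  · have hinf : (3 : ℝ) / 2 ≤ ldimf G := le_csInf ⟨_, hmem⟩ hset_lb
    refine le_trans ?_ hinf
    rw [div_le_div_iff₀ (by nlinarith) (by norm_num)]
    nlinarith
  · exact csInf_le hbdd hmem
end

section
/- The graph G(Z*_{12}) satisfies 11/5 ≤ ldim_f(G(Z*_{12})) ≤ 11/2. -/
open Finset

namespace ZStar12

abbrev V12 := {x : Fin 12 // x.val ≠ 0}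

instance (n : ℕ) : DecidableRel (zStarGraph n).Adj := fun x y =>
  inferInstanceAs (Decidable (x ≠ y ∧ 1 < Nat.gcd (x.1.val * y.1.val) n))

/-- Every vertex is adjacent to every nonunit other than itself. -/
lemma adj_of_nonunit : ∀ u w : V12, 1 < Nat.gcd u.1.val 12 → w ≠ u →
    (zStarGraph 12).Adj w u := by decide

lemma half_lrf : IsLocalResolvingFunction (zStarGraph 12) (fun _ => (1:ℝ)/2) := by
  constructor
  · intro w; constructor <;> norm_num
  · intro u v huv
    have hne : u ≠ v := huv.ne
    have hsub : ({u, v} : Finset V12) ⊆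
        Finset.univ.filter (fun w => (zStarGraph 12).dist w u ≠ (zStarGraph 12).dist w v) := by
      intro w hw
      simp only [mem_insert, mem_singleton] at hw
      simp only [mem_filter, mem_univ, true_and]
      rcases hw with rfl | rfl
      · rw [SimpleGraph.dist_self, SimpleGraph.dist_eq_one_iff_adj.2 huv]; norm_num
      · rw [SimpleGraph.dist_self, SimpleGraph.dist_eq_one_iff_adj.2 huv.symm]; norm_num
    calc (1:ℝ) = ∑ w ∈ ({u, v} : Finset V12), (1:ℝ)/2 := by
            rw [Finset.sum_pair hne]; norm_num
      _ ≤ _ := Finset.sum_le_sum_of_subset_of_nonneg hsub (by intro i _ _; norm_num)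

lemma mem_set : (11:ℝ)/2 ∈ {s : ℝ | ∃ ζ : V12 → ℝ,
    IsLocalResolvingFunction (zStarGraph 12) ζ ∧ s = ∑ v, ζ v} := by
  refine ⟨fun _ => (1:ℝ)/2, half_lrf, ?_⟩
  rw [Finset.sum_const, Finset.card_univ]
  norm_num [show Fintype.card V12 = 11 from by decide]

/-- For two adjacent nonunits, the local resolving neighborhood is exactly the pair. -/
lemma Rpair (u v : V12) (hu : 1 < Nat.gcd u.1.val 12) (hv : 1 < Nat.gcd v.1.val 12)
    (huv : u ≠ v) :
    Finset.univ.filter (fun w => (zStarGraph 12).dist w u ≠ (zStarGraph 12).dist w v)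
      = {u, v} := by
  have hadj : (zStarGraph 12).Adj u v := adj_of_nonunit v u hv huv
  ext w
  simp only [mem_filter, mem_univ, true_and, mem_insert, mem_singleton]
  constructor
  · intro h
    by_contra hc
    push_neg at hc
    obtain ⟨h1, h2⟩ := hc
    exact h (by rw [SimpleGraph.dist_eq_one_iff_adj.2 (adj_of_nonunit u w hu h1),
      SimpleGraph.dist_eq_one_iff_adj.2 (adj_of_nonunit v w hv h2)])
  · rintro (rfl | rfl)
    · rw [SimpleGraph.dist_self, SimpleGraph.dist_eq_one_iff_adj.2 hadj]; norm_num
    · rw [SimpleGraph.dist_self, SimpleGraph.dist_eq_one_iff_adj.2 hadj.symm]; norm_num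

end ZStar12

open ZStar12

/-- `11/5 ≤ ldimf(G(Z*_{12})) ≤ 11/2`. -/
theorem ldimf_zStarGraph_twelve :
    (11 : ℝ) / 5 ≤ ldimf (zStarGraph 12) ∧ ldimf (zStarGraph 12) ≤ (11 : ℝ) / 2 := by
  constructor
  · apply le_csInf ⟨_, mem_set⟩
    rintro s ⟨ζ, hζ, rfl⟩
    have h0 : ∀ w : V12, 0 ≤ ζ w := fun w => (hζ.1 w).1
    have key : ∀ u v : V12, 1 < Nat.gcd u.1.val 12 → 1 < Nat.gcd v.1.val 12 → u ≠ v →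
        1 ≤ ζ u + ζ v := by
      intro u v hu hv huv
      have := hζ.2 u v (adj_of_nonunit v u hv huv)
      rwa [Rpair u v hu hv huv, Finset.sum_pair huv] at this
    set a2 : V12 := ⟨2, by decide⟩
    set a3 : V12 := ⟨3, by decide⟩
    set a4 : V12 := ⟨4, by decide⟩
    set a6 : V12 := ⟨6, by decide⟩
    set a8 : V12 := ⟨8, by decide⟩
    set a9 : V12 := ⟨9, by decide⟩
    have h23 := key a2 a3 (by decide) (by decide) (by decide)
    have h46 := key a4 a6 (by decide) (by decide) (by decide)
    have h89 := key a8 a9 (by decide) (by decide) (by decide)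
    have hsub : ({a2, a3, a4, a6, a8, a9} : Finset V12) ⊆ Finset.univ := Finset.subset_univ _
    have hle := Finset.sum_le_sum_of_subset_of_nonneg hsub (fun i _ _ => h0 i)
    have hsum : ∑ w ∈ ({a2, a3, a4, a6, a8, a9} : Finset V12), ζ w
        = ζ a2 + ζ a3 + ζ a4 + ζ a6 + ζ a8 + ζ a9 := by
      rw [Finset.sum_insert (by decide), Finset.sum_insert (by decide),
        Finset.sum_insert (by decide), Finset.sum_insert (by decide),
        Finset.sum_insert (by decide), Finset.sum_singleton]
      ring
    rw [hsum] at hle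
    linarith
  · apply csInf_le ⟨0, ?_⟩ mem_set
    rintro s ⟨ζ, hζ, rfl⟩
    exact Finset.sum_nonneg fun w _ => (hζ.1 w).1
end
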